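/- Let G be an undirected graph, S ⊆ E(G), and z a vertex of G such that no edge of S is incident with z and no two edges of S share an endpoint. Then G has a z-flower of order t (t S-cycles through z, pairwise vertex-disjoint apart from z) if and only if there exists a set T of 2t endpoints of edges of S that can be partitioned into t edges of S and such that T is linked to N(z) in G - z by 2t vertex-disjoint paths. -/

import Mathlib

namespace SimpleGraph
variable {V : Type} {G : SimpleGraph V}

/-- Lift a walk whose support lies in `s` to the induced subgraph on `s`. -/
def Walk.toInduce {s : Set V} : ∀ {u v : V} (w : G.Walk u v)
    (hw : ∀ x ∈ w.support, x ∈ s),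
    (G.induce s).Walk ⟨u, hw u w.start_mem_support⟩ ⟨v, hw v w.end_mem_support⟩
  | _, _, .nil, _ => .nil
  | _, _, .cons h p, hw =>
      Walk.cons (by exact h) (p.toInduce (fun x hx => hw x (by simp [hx])))

lemma Walk.support_toInduce {s : Set V} {u v : V} (w : G.Walk u v)
    (hw : ∀ x ∈ w.support, x ∈ s) :
    (w.toInduce hw).support.map Subtype.val = w.support := by
  induction w with
  | nil => rfl
  | cons h p ih => exact congrArg (List.cons _) (ih _)

lemma Walk.mem_of_mem_toInduce {s : Set V} {u v : V} {w : G.Walk u v}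
    {hw : ∀ x ∈ w.support, x ∈ s} {x : s} (hx : x ∈ (w.toInduce hw).support) :
    x.1 ∈ w.support := by
  rw [← w.support_toInduce hw]
  exact List.mem_map_of_mem hx

lemma Walk.IsPath.toInduce {s : Set V} {u v : V} {w : G.Walk u v} (hp : w.IsPath)
    (hw : ∀ x ∈ w.support, x ∈ s) : (w.toInduce hw).IsPath := by
  rw [Walk.isPath_def] at hp ⊢
  rw [← w.support_toInduce hw] at hp
  exact hp.of_map

lemma Walk.exists_split_of_mem_edges {u v : V} (w : G.Walk u v) {e : Sym2 V}
    (he : e ∈ w.edges) : ∃ (x y : V) (q : G.Walk u x) (h : G.Adj x y) (r : G.Walk y v),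
      e = s(x, y) ∧ w = q.append (.cons h r) := by
  induction w with
  | nil => simp at he
  | cons h p ih =>
    rw [Walk.edges_cons, List.mem_cons] at he
    rcases he with rfl | he
    · exact ⟨_, _, .nil, h, p, rfl, rfl⟩
    · obtain ⟨x, y, q, h', r, rfl, rfl⟩ := ih he
      exact ⟨x, y, .cons h q, h', r, rfl, rfl⟩

end SimpleGraph

open SimpleGraph

/-- Assume no edge of `S` is incident with `z` and `S` is a matching. Then `G` has a
`z`-flower of order `t` iff there is a set of `2t` endpoints of `S`-edges, partitioned
into `t` edges of `S`, that is linked to `N(z)` in `G - z` by `2t` vertex-disjoint paths.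
The `2t` endpoints are encoded as `b i j` (`i : Fin t`, `j : Fin 2`), the partition into
`S`-edges by `s(b i 0, b i 1) ∈ S`. -/
theorem stmt7 {V : Type} [Fintype V] [DecidableEq V] (G : SimpleGraph V)
    (S : Set (Sym2 V)) (hS : S ⊆ G.edgeSet) (z : V)
    (hz : ∀ e ∈ S, z ∉ e)
    (hmatch : ∀ e ∈ S, ∀ f ∈ S, e ≠ f → ∀ v : V, v ∈ e → v ∉ f)
    (t : ℕ) :
    letI Gz := G.induce {v : V | v ≠ z}
    ((∃ C : Fin t → G.Walk z z,
        (∀ i, (C i).IsCycle) ∧ (∀ i, ∃ e ∈ (C i).edges, e ∈ S) ∧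
        (∀ i j, i ≠ j → ∀ v : V, v ∈ (C i).support → v ∈ (C j).support → v = z)) ↔
     (∃ (b : Fin t → Fin 2 → {v : V // v ≠ z})
        (A : Fin t → Fin 2 → {v : V // v ≠ z})
        (P : ∀ (i : Fin t) (j : Fin 2), Gz.Walk (A i j) (b i j)),
        Function.Injective (fun p : Fin t × Fin 2 => b p.1 p.2) ∧
        -- the 2t endpoints are partitioned into t edges of S:
        (∀ i : Fin t, s((b i 0).1, (b i 1).1) ∈ S) ∧
        -- paths start in N(z):
        (∀ i j, G.Adj z (A i j).1) ∧
        (∀ i j, (P i j).IsPath) ∧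
        -- the 2t paths in G - z are pairwise vertex-disjoint:
        (∀ (i i' : Fin t) (j j' : Fin 2), (i, j) ≠ (i', j') →
          ∀ v : {v : V // v ≠ z},
            v ∈ (P i j).support → v ∈ (P i' j').support → False))) := by
  constructor
  · rintro ⟨C, hcyc, hSedge, hdisj⟩
    have key : ∀ i, ∃ (bb aa : Fin 2 → {v : V // v ≠ z})
        (PP : ∀ j, (G.induce {v : V | v ≠ z}).Walk (aa j) (bb j)),
        s((bb 0).1, (bb 1).1) ∈ S ∧
        (∀ j, G.Adj z (aa j).1) ∧
        (∀ j, (PP j).IsPath) ∧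
        (∀ j v, v ∈ (PP j).support → v.1 ∈ (C i).support) ∧
        (∀ v, v ∈ (PP 0).support → v ∈ (PP 1).support → False) := by
      intro i
      obtain ⟨e, he, heS⟩ := hSedge i
      have hc := hcyc i
      have hez : z ∉ e := hz e heS
      cases hw : C i with
      | nil =>
        rw [hw] at hc
        exact absurd rfl hc.ne_nil
      | @cons _ a _ hadj p =>
        rw [hw] at hc he
        rw [Walk.cons_isCycle_iff] at hc
        obtain ⟨hp, -⟩ := hc
        rw [Walk.edges_cons, List.mem_cons] at he
        rcases he with rfl | he
        · exact absurd (Sym2.mem_mk_left z _) hez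
        obtain ⟨x, y, q, hxy, r, rfl, rfl⟩ := p.exists_split_of_mem_edges he
        have hnd : (q.support ++ r.support).Nodup := by
          have h := hp.support_nodup
          rwa [Walk.support_append, Walk.support_cons, List.tail_cons] at h
        rw [List.nodup_append] at hnd
        obtain ⟨nq, nr, dqr⟩ := hnd
        have hzq : z ∉ q.support := fun h => dqr _ h _ r.end_mem_support rfl
        have hqP : q.IsPath := hp.of_append_left
        have hrP : r.IsPath := (hp.of_append_right).of_cons
        have hxz : x ≠ z := fun h => hzq (h ▸ q.end_mem_support)
        have haz : a ≠ z := fun h => hzq (h ▸ q.start_mem_support)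
        have hyz : y ≠ z := by
          intro h; subst h; exact hez (Sym2.mem_mk_right _ _)
        have hrrP : r.reverse.IsPath := hrP.reverse
        cases hrr : r.reverse with
        | nil => exact absurd rfl hyz
        | @cons _ c _ hzb r' =>
          rw [hrr] at hrrP
          rw [Walk.cons_isPath_iff] at hrrP
          obtain ⟨hr'P, hzr'⟩ := hrrP
          have hbz : c ≠ z := fun h => hzr' (h ▸ r'.start_mem_support)
          have hr'sub : ∀ v ∈ r'.support, v ∈ r.support := by
            intro v hv
            have h2 : v ∈ r.reverse.support := by
              rw [hrr, Walk.support_cons]; exact List.mem_cons_of_mem _ hv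
            rwa [Walk.support_reverse, List.mem_reverse] at h2
          have hCsub : ∀ v, (v ∈ q.support ∨ v ∈ r.support) →
              v ∈ (Walk.cons hadj (q.append (Walk.cons hxy r))).support := by
            intro v hv
            rw [Walk.support_cons]
            refine List.mem_cons_of_mem _ ?_
            rw [Walk.mem_support_append_iff]
            rcases hv with hv | hv
            · exact Or.inl hv
            · exact Or.inr (by rw [Walk.support_cons]; exact List.mem_cons_of_mem _ hv)
          have hqs : ∀ v ∈ q.support, v ∈ {v : V | v ≠ z} :=
            fun v hv hvz => hzq (hvz ▸ hv)
          have hr's : ∀ v ∈ r'.support, v ∈ {v : V | v ≠ z} :=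
            fun v hv hvz => hzr' (hvz ▸ hv)
          refine ⟨![⟨x, hxz⟩, ⟨y, hyz⟩], ![⟨a, haz⟩, ⟨c, hbz⟩],
            fun j => match j with
              | 0 => q.toInduce hqs
              | 1 => r'.toInduce hr's, ?_, ?_, ?_, ?_, ?_⟩
          · exact heS
          · intro j; fin_cases j
            · exact hadj
            · exact hzb
          · intro j; fin_cases j
            · exact hqP.toInduce hqs
            · exact hr'P.toInduce hr's
          · intro j v hv; fin_cases j
            · exact hCsub _ (Or.inl (Walk.mem_of_mem_toInduce hv))
            · exact hCsub _ (Or.inr (hr'sub _ (Walk.mem_of_mem_toInduce hv)))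
          · intro v h0 h1
            exact dqr _ (Walk.mem_of_mem_toInduce h0) _ (hr'sub _ (Walk.mem_of_mem_toInduce h1)) rfl
    choose bb aa PP h1 h2 h3 h4 h5 using key
    have hd : ∀ (i i' : Fin t) (j j' : Fin 2), (i, j) ≠ (i', j') →
        ∀ v : {v : V // v ≠ z},
          v ∈ (PP i j).support → v ∈ (PP i' j').support → False := by
      intro i i' j j' hne v hv hv'
      by_cases hii : i = i'
      · subst hii
        have hjj : j ≠ j' := by
          intro h; exact hne (by rw [h])
        fin_cases j <;> fin_cases j'
        · exact hjj rfl
        · exact h5 i v hv hv'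
        · exact h5 i v hv' hv
        · exact hjj rfl
      · have h1v := h4 i j v hv
        have h2v := h4 i' j' v hv'
        exact v.2 (hdisj i i' hii v.1 h1v h2v)
    refine ⟨bb, aa, PP, ?_, h1, h2, h3, hd⟩
    intro p p' hpp
    by_contra hne
    exact hd p.1 p'.1 p.2 p'.2 (by simpa [Prod.ext_iff] using hne) (bb p.1 p.2)
      ((PP p.1 p.2).end_mem_support)
      (by rw [show bb p.1 p.2 = bb p'.1 p'.2 from hpp]; exact (PP p'.1 p'.2).end_mem_support)
  · rintro ⟨b, A, P, hbinj, hbS, hA, hPpath, hPdisj⟩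
    classical
    let ιh : (G.induce {v : V | v ≠ z}) →g G := ⟨Subtype.val, fun {a b} h => h⟩
    have hbadj : ∀ i, G.Adj (b i 0).1 (b i 1).1 := fun i => (G.mem_edgeSet).1 (hS (hbS i))
    let M0 : ∀ i, G.Walk (A i 0).1 (b i 0).1 := fun i => (P i 0).map ιh
    let M1 : ∀ i, G.Walk (b i 1).1 (A i 1).1 := fun i => ((P i 1).map ιh).reverse
    let W : ∀ i, G.Walk (A i 0).1 z := fun i =>
      (M0 i).append (Walk.cons (hbadj i) ((M1 i).append (Walk.cons ((hA i 1).symm) Walk.nil)))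
    have hzmap : ∀ i j, z ∉ ((P i j).map ιh).support := by
      intro i j h
      rw [Walk.support_map] at h
      obtain ⟨u, _, hu⟩ := List.mem_map.1 h
      exact u.2 hu
    have hnodupmap : ∀ i j, ((P i j).map ιh).support.Nodup := by
      intro i j
      rw [Walk.support_map]
      exact ((hPpath i j).support_nodup).map Subtype.val_injective
    have hdisjmap : ∀ i i' j j', (i, j) ≠ (i', j') →
        List.Disjoint ((P i j).map ιh).support ((P i' j').map ιh).support := by
      intro i i' j j' h v hv hv'
      rw [Walk.support_map] at hv hv'
      obtain ⟨u, hu, rfl⟩ := List.mem_map.1 hv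
      obtain ⟨u', hu', he⟩ := List.mem_map.1 hv'
      have : u' = u := Subtype.ext he
      subst this
      exact hPdisj i i' j j' h u' hu hu'
    have hWsup : ∀ i, (W i).support =
        ((P i 0).map ιh).support ++ (((P i 1).map ιh).support.reverse ++ [z]) := by
      intro i
      simp [W, M0, M1, Walk.support_append, Walk.support_cons, Walk.support_reverse]
    have hWpath : ∀ i, (W i).IsPath := by
      intro i
      rw [Walk.isPath_def, hWsup i, List.nodup_append, List.nodup_append]
      refine ⟨hnodupmap i 0, ⟨List.nodup_reverse.2 (hnodupmap i 1), List.nodup_singleton z, ?_⟩, ?_⟩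
      · intro a ha c ha' hac
        rw [List.mem_reverse] at ha
        rw [List.mem_singleton] at ha'
        subst hac; subst ha'
        exact hzmap i 1 ha
      · intro a ha c ha' hac
        rw [List.mem_append] at ha'
        subst hac
        rcases ha' with ha' | ha'
        · rw [List.mem_reverse] at ha'
          exact hdisjmap i i 0 1 (by simp) ha ha'
        · rw [List.mem_singleton] at ha'
          subst ha'
          exact hzmap i 0 ha
    have hA01 : ∀ i, A i 0 ≠ A i 1 := by
      intro i h
      exact hPdisj i i 0 1 (by simp) (A i 0) ((P i 0).start_mem_support)
        (by rw [h]; exact (P i 1).start_mem_support)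
    have hWedges : ∀ i, (W i).edges =
        ((P i 0).map ιh).edges ++ (s((b i 0).1, (b i 1).1) ::
          (((P i 1).map ιh).edges.reverse ++ [s((A i 1).1, z)])) := by
      intro i
      simp [W, M0, M1, Walk.edges_append, Walk.edges_cons, Walk.edges_reverse]
    have hCcyc : ∀ i, (Walk.cons (hA i 0) (W i)).IsCycle := by
      intro i
      rw [Walk.cons_isCycle_iff]
      refine ⟨hWpath i, ?_⟩
      intro hmem
      rw [hWedges i] at hmem
      rcases List.mem_append.1 hmem with hmem | hmem
      · exact hzmap i 0 (Walk.fst_mem_support_of_mem_edges _ hmem)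
      rcases List.mem_cons.1 hmem with hmem | hmem
      · rw [Sym2.eq_iff] at hmem
        rcases hmem with ⟨h1, -⟩ | ⟨h1, -⟩
        · exact (b i 0).2 h1.symm
        · exact (b i 1).2 h1.symm
      rcases List.mem_append.1 hmem with hmem | hmem
      · rw [List.mem_reverse] at hmem
        exact hzmap i 1 (Walk.fst_mem_support_of_mem_edges _ hmem)
      · rw [List.mem_singleton, Sym2.eq_iff] at hmem
        rcases hmem with ⟨h1, h2⟩ | ⟨-, h2⟩
        · exact (A i 0).2 h2
        · exact hA01 i (Subtype.ext h2)
    have hmemW : ∀ i v, v ∈ (W i).support →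
        (∃ u, (u ∈ (P i 0).support ∨ u ∈ (P i 1).support) ∧ u.1 = v) ∨ v = z := by
      intro i v hv
      rw [hWsup i] at hv
      rcases List.mem_append.1 hv with hv | hv
      · rw [Walk.support_map] at hv
        obtain ⟨u, hu, hu'⟩ := List.mem_map.1 hv
        exact Or.inl ⟨u, Or.inl hu, hu'⟩
      rcases List.mem_append.1 hv with hv | hv
      · rw [List.mem_reverse, Walk.support_map] at hv
        obtain ⟨u, hu, hu'⟩ := List.mem_map.1 hv
        exact Or.inl ⟨u, Or.inr hu, hu'⟩
      · exact Or.inr (List.mem_singleton.1 hv)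
    refine ⟨fun i => Walk.cons (hA i 0) (W i), hCcyc, ?_, ?_⟩
    · intro i
      refine ⟨s((b i 0).1, (b i 1).1), ?_, hbS i⟩
      rw [Walk.edges_cons, hWedges i]
      simp
    · intro i j hij v hvi hvj
      by_contra hvz
      rw [Walk.support_cons] at hvi hvj
      rcases List.mem_cons.1 hvi with rfl | hvi
      · exact hvz rfl
      rcases List.mem_cons.1 hvj with rfl | hvj
      · exact hvz rfl
      rcases hmemW i v hvi with ⟨u, hu, rfl⟩ | rfl
      · rcases hmemW j u.1 hvj with ⟨u', hu', he⟩ | he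
        · have : u' = u := Subtype.ext he
          subst this
          rcases hu with hu | hu <;> rcases hu' with hu' | hu'
          · exact hPdisj i j 0 0 (by simp [hij]) u' hu hu'
          · exact hPdisj i j 0 1 (by simp [hij]) u' hu hu'
          · exact hPdisj i j 1 0 (by simp [hij]) u' hu hu'
          · exact hPdisj i j 1 1 (by simp [hij]) u' hu hu'
        · exact u.2 he
      · exact hvz rfl
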